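/- Let A be an m×k integer matrix and c an integer vector such that the system A z = c, z ≥ 0 has a real solution. Then it has a basic solution z' with basis matrix B (a square invertible submatrix of a row-reduced version of A) such that |det(B)|·z' is a nonnegative integer vector, with each nonzero component equal to ±det(B_i) for B_i obtained from B by replacing a column with the right-hand side. -/

import Mathlib

open Matrix

/-- A feasible system has a feasible solution whose support columns are "independent"
in the kernel sense. -/
lemma exists_minimal_feasible {m k : ℕ} (M : Matrix (Fin m) (Fin k) ℝ) (b : Fin m → ℝ)
    (hfeas : ∃ z : Fin k → ℝ, (∀ i, 0 ≤ z i) ∧ M.mulVec z = b) :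
    ∃ z : Fin k → ℝ, (∀ i, 0 ≤ z i) ∧ M.mulVec z = b ∧
      ∀ d : Fin k → ℝ, (∀ j, z j = 0 → d j = 0) → M.mulVec d = 0 → d = 0 := by
  classical
  set supp : (Fin k → ℝ) → Finset (Fin k) :=
    fun z => Finset.univ.filter (fun j => z j ≠ 0) with hsupp
  have hex : ∃ n, ∃ z : Fin k → ℝ,
      ((∀ i, 0 ≤ z i) ∧ M.mulVec z = b) ∧ (supp z).card = n := by
    obtain ⟨z, h1, h2⟩ := hfeas
    exact ⟨_, z, ⟨h1, h2⟩, rfl⟩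
  obtain ⟨z, hz, hcard⟩ := Nat.find_spec hex
  refine ⟨z, hz.1, hz.2, ?_⟩
  by_contra hdep
  push_neg at hdep
  obtain ⟨d, hd0, hdker, hdne⟩ := hdep
  obtain ⟨j1, hj1⟩ : ∃ j, d j ≠ 0 := by
    by_contra h; push_neg at h; exact hdne (funext h)
  set e : Fin k → ℝ := if d j1 < 0 then d else -d with he
  have he0 : ∀ j, z j = 0 → e j = 0 := by
    intro j hj
    by_cases h : d j1 < 0 <;> simp [he, h, hd0 j hj]
  have heker : M.mulVec e = 0 := by
    by_cases h : d j1 < 0 <;> simp [he, h, hdker, Matrix.mulVec_neg]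
  have hj1e : e j1 < 0 := by
    rcases lt_or_gt_of_ne hj1 with h | h
    · simp [he, h]
    · rw [he, if_neg (by linarith)]; simpa using h
  set s : Finset (Fin k) := Finset.univ.filter (fun j => e j < 0) with hs
  have hsne : s.Nonempty := ⟨j1, by simp [hs, hj1e]⟩
  set f : Fin k → ℝ := fun j => z j / (-(e j)) with hf
  obtain ⟨j0, hj0mem, hj0⟩ := Finset.exists_mem_eq_inf' hsne f
  set t := s.inf' hsne f with ht
  have hj0neg : e j0 < 0 := by simpa [hs] using hj0mem
  have htnonneg : 0 ≤ t := by
    rw [hj0, hf]; exact div_nonneg (hz.1 j0) (by linarith)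
  have htle : ∀ j ∈ s, t ≤ f j := fun j hj => Finset.inf'_le f hj
  set z2 : Fin k → ℝ := fun j => z j + t * e j with hz2
  have hz2nonneg : ∀ j, 0 ≤ z2 j := by
    intro j
    by_cases h : e j < 0
    · have h1 := htle j (by simp [hs, h])
      rw [hf] at h1
      have h2 : t * (-(e j)) ≤ z j := by
        rw [le_div_iff₀ (by linarith)] at h1; linarith
      simp only [hz2]; nlinarith
    · push_neg at h
      have : 0 ≤ t * e j := mul_nonneg htnonneg h
      simp only [hz2]; linarith [hz.1 j]
  have hz2feas : M.mulVec z2 = b := by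
    have hzz : z2 = z + t • e := by funext j; simp [hz2, mul_comm]
    rw [hzz, Matrix.mulVec_add, Matrix.mulVec_smul, hz.2, heker]
    simp
  have hz2j0 : z2 j0 = 0 := by
    have hne : e j0 ≠ 0 := ne_of_lt hj0neg
    have h2 : -e j0 ≠ 0 := ne_of_gt (by linarith)
    have hte : t * e j0 = -(z j0) := by
      rw [hj0, hf]
      rw [div_mul_eq_mul_div, div_eq_iff h2]
      ring
    simp only [hz2]; linarith
  have hj0z : z j0 ≠ 0 := by
    intro h
    exact absurd (he0 j0 h) (by linarith)
  have hssub : supp z2 ⊂ supp z := by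
    constructor
    · intro j hj
      simp only [hsupp, Finset.mem_filter, Finset.mem_univ, true_and] at hj ⊢
      intro h
      exact hj (by simp only [hz2, h, he0 j h]; ring)
    · intro hsub
      have h1 : j0 ∈ supp z := by
        simp only [hsupp, Finset.mem_filter, Finset.mem_univ, true_and]; exact hj0z
      have h2 : j0 ∉ supp z2 := by
        simp only [hsupp, Finset.mem_filter, Finset.mem_univ, true_and, not_not]
        exact hz2j0
      exact h2 (hsub h1)
  have hlt : (supp z2).card < Nat.find hex := by
    rw [← hcard]; exact Finset.card_lt_card hssub
  exact Nat.find_min hex hlt ⟨z2, ⟨hz2nonneg, hz2feas⟩, rfl⟩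

theorem stmt_19 {m k : ℕ} (A : Matrix (Fin m) (Fin k) ℤ) (c : Fin m → ℤ)
    (hfeas : ∃ z : Fin k → ℝ, (∀ i, 0 ≤ z i) ∧
      (A.map (Int.cast : ℤ → ℝ)).mulVec z = fun i => (c i : ℝ)) :
    ∃ (p : ℕ) (rowSel : Fin p → Fin m) (colSel : Fin p → Fin k),
      Function.Injective rowSel ∧ Function.Injective colSel ∧
      (A.submatrix rowSel colSel).det ≠ 0 ∧
      ∃ z' : Fin k → ℝ,
        (∀ i, 0 ≤ z' i) ∧
        ((A.map (Int.cast : ℤ → ℝ)).mulVec z' = fun i => (c i : ℝ)) ∧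
        (∀ j : Fin k, (∀ l : Fin p, colSel l ≠ j) → z' j = 0) ∧
        (∀ l : Fin p,
          z' (colSel l) =
            (((A.submatrix rowSel colSel).updateCol l
                (fun r => c (rowSel r))).det : ℝ) /
            ((A.submatrix rowSel colSel).det : ℝ)) ∧
        (∀ j : Fin k,
          ∃ zint : ℤ, 0 ≤ zint ∧
            (|(A.submatrix rowSel colSel).det| : ℝ) * z' j = (zint : ℝ)) := by
  classical
  set M : Matrix (Fin m) (Fin k) ℝ := A.map (Int.cast : ℤ → ℝ) with hM
  set b : Fin m → ℝ := fun i => (c i : ℝ) with hb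
  obtain ⟨z, hznn, hzeq, hzker⟩ := exists_minimal_feasible M b hfeas
  set supp : Finset (Fin k) := Finset.univ.filter (fun j => z j ≠ 0) with hsupp
  set p : ℕ := supp.card with hp
  set iso := supp.orderIsoOfFin rfl with hiso
  set colSel : Fin p → Fin k := fun l => (iso l : Fin k) with hcolSel
  have hcolInj : Function.Injective colSel := by
    intro l1 l2 h
    exact iso.injective (Subtype.ext h)
  have hcolMem : ∀ l, z (colSel l) ≠ 0 := by
    intro l
    exact (Finset.mem_filter.mp (iso l).2).2
  have hcolSurj : ∀ j, z j ≠ 0 → ∃ l, colSel l = j := by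
    intro j hj
    have hjm : j ∈ supp := by simp [hsupp, hj]
    exact ⟨iso.symm ⟨j, hjm⟩, by simp [hcolSel]⟩
  -- restriction of sums to the support
  have hsum : ∀ (a : Fin k → ℝ),
      (∑ j, a j * z j) = ∑ l : Fin p, a (colSel l) * z (colSel l) := by
    intro a
    rw [← Finset.sum_subset (Finset.subset_univ supp)
      (by intro j _ hj; simp only [hsupp, Finset.mem_filter, Finset.mem_univ, true_and,
        not_not] at hj; simp [hj])]
    rw [← Finset.sum_coe_sort supp (fun j => a j * z j)]
    exact (Equiv.sum_comp iso.toEquiv (fun x => a x * z x)).symm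
  -- columns of M on the support are linearly independent
  set N : Matrix (Fin m) (Fin p) ℝ := M.submatrix id colSel with hN
  have hNli : LinearIndependent ℝ (fun l : Fin p => Nᵀ l) := by
    rw [Fintype.linearIndependent_iff]
    intro g hg l
    set d : Fin k → ℝ := fun j => if h : j ∈ supp then g (iso.symm ⟨j, h⟩) else 0 with hd
    have hdc : ∀ l, d (colSel l) = g l := by
      intro l
      have hmem : (colSel l : Fin k) ∈ supp := (iso l).2
      have hsub : (⟨colSel l, hmem⟩ : {x // x ∈ supp}) = iso l := Subtype.ext rfl
      simp only [hd, dif_pos hmem, hsub, OrderIso.symm_apply_apply]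
    have hd0 : ∀ j, z j = 0 → d j = 0 := by
      intro j hj
      have : j ∉ supp := by simp [hsupp, hj]
      simp [hd, this]
    have hdker : M.mulVec d = 0 := by
      funext i
      have h1 : M.mulVec d i = ∑ j, M i j * d j := rfl
      have h2 : (∑ j, M i j * d j) = ∑ l : Fin p, M i (colSel l) * d (colSel l) := by
        rw [← Finset.sum_subset (Finset.subset_univ supp)
          (by intro j _ hj
              simp only [hsupp, Finset.mem_filter, Finset.mem_univ, true_and, not_not] at hj
              simp [hd0 j hj])]
        rw [← Finset.sum_coe_sort supp (fun j => M i j * d j)]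
        exact (Equiv.sum_comp iso.toEquiv (fun x => M i x * d x)).symm
      have h3 := congrFun hg i
      simp only [Finset.sum_apply, Pi.smul_apply, transpose_apply, Pi.zero_apply,
        smul_eq_mul] at h3
      rw [Pi.zero_apply, h1, h2]
      rw [← h3]
      apply Finset.sum_congr rfl
      intro l _
      rw [hdc l]
      simp only [hN, submatrix_apply, id_eq]
      ring
    have := hzker d hd0 hdker
    rw [← hdc l, this]
    rfl
  -- N has full column rank p, hence its rows span ℝ^p
  have hrankT : Nᵀ.rank = p := by
    have := hNli.rank_matrix
    exact this.trans (Fintype.card_fin p)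
  have hrankN : N.rank = p := by rw [← rank_transpose]; exact hrankT
  have hspan : Submodule.span ℝ (Set.range N) = ⊤ := by
    apply Submodule.eq_top_of_finrank_eq
    rw [show Set.range N = Set.range N.row from rfl, ← rank_eq_finrank_span_row N, hrankN, Module.finrank_fin_fun]
  -- extract a basis among the rows of N
  obtain ⟨tset, htsub, htspan, htli⟩ := exists_linearIndependent ℝ (Set.range N)
  rw [hspan] at htspan
  have htfin : tset.Finite := htli.setFinite
  haveI : Fintype tset := htfin.fintype
  have htcard : Fintype.card tset = p := by
    have hbasis : Module.Basis tset ℝ (Fin p → ℝ) :=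
      Module.Basis.mk htli (by rw [Subtype.range_coe]; exact le_of_eq htspan.symm)
    have := Module.finrank_eq_card_basis hbasis
    rw [Module.finrank_fin_fun] at this
    omega
  set eqv : Fin p ≃ tset := (Fintype.equivFinOfCardEq htcard).symm with heqv
  have hrow : ∀ x : tset, ∃ i : Fin m, N i = x := fun x => htsub x.2
  choose g hg using hrow
  set rowSel : Fin p → Fin m := fun l => g (eqv l) with hrowSel
  have hrowInj : Function.Injective rowSel := by
    intro l1 l2 h
    apply eqv.injective
    apply Subtype.ext
    rw [← hg (eqv l1), ← hg (eqv l2), hrowSel] at *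
    exact congrArg N h
  -- the basis matrix
  set B : Matrix (Fin p) (Fin p) ℤ := A.submatrix rowSel colSel with hB
  set BR : Matrix (Fin p) (Fin p) ℝ := M.submatrix rowSel colSel with hBR
  have hBmap : B.map (Int.cast : ℤ → ℝ) = BR := rfl
  have hBRrows : (fun l : Fin p => BR l) = (Subtype.val ∘ eqv) := by
    funext l
    have := hg (eqv l)
    funext l'
    have h1 : BR l l' = N (rowSel l) l' := rfl
    rw [h1, this]
    rfl
  have hBRunit : IsUnit BR := by
    rw [← linearIndependent_rows_iff_isUnit, show BR.row = Subtype.val ∘ eqv from hBRrows]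
    exact htli.comp eqv eqv.injective
  have hBRdet : BR.det ≠ 0 := by
    intro h
    have := (isUnit_iff_isUnit_det BR).mp hBRunit
    rw [h] at this
    exact this.ne_zero rfl
  have hBdetR : ((B.det : ℤ) : ℝ) = BR.det := by
    have h := (Int.castRingHom ℝ).map_det B
    simp only [RingHom.mapMatrix_apply, Int.coe_castRingHom, eq_intCast] at h
    rw [hBmap] at h
    exact h
  have hBdet : B.det ≠ 0 := by
    intro h
    apply hBRdet
    rw [← hBdetR, h, Int.cast_zero]
  -- the basic system and Cramer's rule
  set x : Fin p → ℝ := fun l => z (colSel l) with hx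
  set bb : Fin p → ℝ := fun l => b (rowSel l) with hbb
  have hBsys : BR.mulVec x = bb := by
    funext r
    have h1 : BR.mulVec x r = ∑ l, M (rowSel r) (colSel l) * z (colSel l) := rfl
    rw [h1, ← hsum (fun j => M (rowSel r) j)]
    have h2 : M.mulVec z (rowSel r) = b (rowSel r) := congrFun hzeq (rowSel r)
    exact h2
  have hcram : BR.det • x = cramer BR bb := by
    have h1 : BR.mulVec (BR.det • x) = BR.mulVec (cramer BR bb) := by
      rw [Matrix.mulVec_smul, hBsys, Matrix.mulVec_cramer]
    exact (Matrix.mulVec_injective_iff_isUnit.mpr hBRunit) h1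
  have hcram' : ∀ l, BR.det * x l = (BR.updateCol l bb).det := by
    intro l
    have := congrFun hcram l
    simpa [Matrix.cramer_apply] using this
  have hupdR : ∀ l, ((B.updateCol l (fun r => c (rowSel r))).det : ℝ) =
      (BR.updateCol l bb).det := by
    intro l
    have h := (Int.castRingHom ℝ).map_det (B.updateCol l (fun r => c (rowSel r)))
    simp only [RingHom.mapMatrix_apply, Int.coe_castRingHom, eq_intCast] at h
    rw [Matrix.map_updateCol, hBmap] at h
    exact h
  refine ⟨p, rowSel, colSel, hrowInj, hcolInj, hBdet, z, hznn, hzeq, ?_, ?_, ?_⟩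
  · intro j hj
    by_contra h
    obtain ⟨l, hl⟩ := hcolSurj j h
    exact hj l hl
  · intro l
    rw [hupdR, ← hcram' l, hBdetR]
    field_simp
    rfl
  · intro j
    by_cases hj : ∃ l, colSel l = j
    · obtain ⟨l, rfl⟩ := hj
      set D : ℤ := B.det with hD
      set Dl : ℤ := (B.updateCol l (fun r => c (rowSel r))).det with hDl
      have hcast : (|D| : ℝ) * z (colSel l) = ((if 0 ≤ D then Dl else -Dl : ℤ) : ℝ) := by
        have h1 : (BR.det) * z (colSel l) = (Dl : ℝ) := by
          rw [hupdR l, ← hcram' l]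
        have h2 : (D : ℝ) * z (colSel l) = (Dl : ℝ) := by rw [hBdetR]; exact h1
        by_cases hDpos : 0 ≤ D
        · have habs : |(D : ℝ)| = (D : ℝ) := abs_of_nonneg (by exact_mod_cast hDpos)
          rw [if_pos hDpos, habs]
          exact h2
        · have habs : |(D : ℝ)| = -(D : ℝ) :=
            abs_of_neg (by exact_mod_cast (by omega : D < 0))
          rw [if_neg hDpos]
          push_cast
          rw [habs]
          linarith
      refine ⟨if 0 ≤ D then Dl else -Dl, ?_, hcast⟩
      have hnn : (0 : ℝ) ≤ ((if 0 ≤ D then Dl else -Dl : ℤ) : ℝ) := by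
        rw [← hcast]
        exact mul_nonneg (by positivity) (hznn _)
      exact_mod_cast hnn
    · push_neg at hj
      have hz0 : z j = 0 := by
        by_contra h
        obtain ⟨l, hl⟩ := hcolSurj j h
        exact hj l hl
      exact ⟨0, le_refl 0, by rw [hz0]; simp⟩
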